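/- If A₁ and A₂ are the apolar algebras of polynomials f₁(x_1,…,x_n) and f₂(y_1,…,y_m) in disjoint sets of variables, then the apolar algebra of the product f₁·f₂ ∈ ℂ[x_1,…,x_n,y_1,…,y_m] is isomorphic as a ℂ-algebra to A₁ ⊗_ℂ A₂. -/

import Mathlib

open MvPolynomial

/-- The action of `g` on `f` as a constant-coefficient differential operator
(`X i` acts as `∂/∂xᵢ`): in terms of monomials,
`∂^d (X^e) = (∏ᵢ (eᵢ)·(eᵢ−1)⋯(eᵢ−dᵢ+1)) · X^(e−d)`. -/
noncomputable def diffOp {σ : Type*} [DecidableEq σ]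
    (g f : MvPolynomial σ ℂ) : MvPolynomial σ ℂ :=
  ∑ d ∈ g.support, ∑ e ∈ f.support,
    (g.coeff d * f.coeff e *
        ∏ i ∈ d.support, ((e i).descFactorial (d i) : ℂ))
      • monomial (e - d) (1 : ℂ)

/-- The apolar ideal `f^⊥` of all differential operators annihilating `f`
(the set is already an ideal, so taking the span is harmless). -/
noncomputable def apolarIdeal {σ : Type*} [DecidableEq σ]
    (f : MvPolynomial σ ℂ) : Ideal (MvPolynomial σ ℂ) :=
  Ideal.span {g | diffOp g f = 0}

/-- The apolar algebra `ℂ[∂] / f^⊥` of `f`. -/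
noncomputable abbrev apolarAlgebra {σ : Type*} [DecidableEq σ]
    (f : MvPolynomial σ ℂ) := MvPolynomial σ ℂ ⧸ apolarIdeal f

set_option linter.unusedSectionVars false
set_option maxHeartbeats 1000000
set_option synthInstance.maxHeartbeats 400000
set_option linter.unreachableTactic false
set_option linter.unusedTactic false

namespace Apolar

variable {σ τ : Type*} [DecidableEq σ] [DecidableEq τ]

noncomputable def cf (d e : σ →₀ ℕ) : ℂ :=
  ∏ i ∈ d.support, ((e i).descFactorial (d i) : ℂ)

lemma cf_eq_prod {d : σ →₀ ℕ} (e : σ →₀ ℕ) {t : Finset σ} (h : d.support ⊆ t) :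
    cf d e = ∏ i ∈ t, ((e i).descFactorial (d i) : ℂ) := by
  refine Finset.prod_subset h fun x _ hx => ?_
  simp [Finsupp.notMem_support_iff.mp hx]

lemma diffOp_def (g f : MvPolynomial σ ℂ) :
    diffOp g f = ∑ d ∈ g.support, ∑ e ∈ f.support,
      (g.coeff d * f.coeff e * cf d e) • monomial (e - d) (1 : ℂ) := rfl

lemma diffOp_eq_sum (g f : MvPolynomial σ ℂ) {s t : Finset (σ →₀ ℕ)}
    (hg : g.support ⊆ s) (hf : f.support ⊆ t) :
    diffOp g f = ∑ d ∈ s, ∑ e ∈ t,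
      (g.coeff d * f.coeff e * cf d e) • monomial (e - d) (1 : ℂ) := by
  rw [diffOp_def]
  rw [Finset.sum_subset hg (fun d _ hd => by
    simp [MvPolynomial.notMem_support_iff.mp hd])]
  refine Finset.sum_congr rfl fun d _ => ?_
  refine Finset.sum_subset hf fun e _ he => by
    simp [MvPolynomial.notMem_support_iff.mp he]

lemma diffOp_zero_left (f : MvPolynomial σ ℂ) : diffOp 0 f = 0 := by
  simp [diffOp_def]

lemma diffOp_zero_right (g : MvPolynomial σ ℂ) : diffOp g 0 = 0 := by
  simp [diffOp_def]

lemma diffOp_add_left (g g' f : MvPolynomial σ ℂ) :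
    diffOp (g + g') f = diffOp g f + diffOp g' f := by
  rw [diffOp_eq_sum (g + g') f (s := g.support ∪ g'.support)
        (MvPolynomial.support_add) (le_refl f.support),
      diffOp_eq_sum g f (s := g.support ∪ g'.support)
        Finset.subset_union_left (le_refl f.support),
      diffOp_eq_sum g' f (s := g.support ∪ g'.support)
        Finset.subset_union_right (le_refl f.support)]
  simp [MvPolynomial.coeff_add, add_mul, add_smul, Finset.sum_add_distrib]

lemma diffOp_add_right (g f f' : MvPolynomial σ ℂ) :
    diffOp g (f + f') = diffOp g f + diffOp g f' := by
  rw [diffOp_eq_sum g (f + f') (le_refl g.support) (t := f.support ∪ f'.support)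
        (MvPolynomial.support_add),
      diffOp_eq_sum g f (le_refl g.support) (t := f.support ∪ f'.support)
        Finset.subset_union_left,
      diffOp_eq_sum g f' (le_refl g.support) (t := f.support ∪ f'.support)
        Finset.subset_union_right]
  simp [MvPolynomial.coeff_add, mul_add, add_mul, add_smul, Finset.sum_add_distrib]

lemma diffOp_smul_left (r : ℂ) (g f : MvPolynomial σ ℂ) :
    diffOp (r • g) f = r • diffOp g f := by
  rw [diffOp_eq_sum (r • g) f (Finsupp.support_smul) (le_refl f.support),
      diffOp_def, Finset.smul_sum]
  refine Finset.sum_congr rfl fun d _ => ?_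
  rw [Finset.smul_sum]
  refine Finset.sum_congr rfl fun e _ => ?_
  rw [MvPolynomial.coeff_smul, smul_eq_mul, smul_smul]
  ring_nf

lemma diffOp_smul_right (r : ℂ) (g f : MvPolynomial σ ℂ) :
    diffOp g (r • f) = r • diffOp g f := by
  rw [diffOp_eq_sum g (r • f) (le_refl g.support) (Finsupp.support_smul),
      diffOp_def, Finset.smul_sum]
  refine Finset.sum_congr rfl fun d _ => ?_
  rw [Finset.smul_sum]
  refine Finset.sum_congr rfl fun e _ => ?_
  rw [MvPolynomial.coeff_smul, smul_eq_mul, smul_smul]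
  ring_nf

lemma diffOp_monomial_monomial (d e : σ →₀ ℕ) (a b : ℂ) :
    diffOp (monomial d a) (monomial e b)
      = (a * b * cf d e) • monomial (e - d) (1 : ℂ) := by
  by_cases ha : a = 0
  · simp [ha, diffOp_def]
  by_cases hb : b = 0
  · simp [hb, diffOp_def]
  rw [diffOp_def, MvPolynomial.support_monomial, MvPolynomial.support_monomial,
    if_neg ha, if_neg hb, Finset.sum_singleton, Finset.sum_singleton]
  simp [MvPolynomial.coeff_monomial]



lemma descFactorial_split (a b c : ℕ) :
    a.descFactorial (b + c) = (a - c).descFactorial b * a.descFactorial c := by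
  induction b with
  | zero => simp
  | succ b ih =>
      rw [Nat.succ_add_eq_add_succ]
      rw [show b + (c+1) = (b+c)+1 by omega, Nat.descFactorial_succ, ih,
        Nat.descFactorial_succ, show a - (b + c) = a - c - b by omega]
      ring

lemma cf_add_left (d d' e : σ →₀ ℕ) :
    cf (d + d') e = cf d (e - d') * cf d' e := by
  rw [cf_eq_prod e (t := d.support ∪ d'.support) (Finsupp.support_add),
      cf_eq_prod (e - d') (t := d.support ∪ d'.support) Finset.subset_union_left,
      cf_eq_prod e (t := d.support ∪ d'.support) Finset.subset_union_right,
      ← Finset.prod_mul_distrib]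
  refine Finset.prod_congr rfl fun i _ => ?_
  rw [Finsupp.add_apply, Finsupp.tsub_apply]
  exact_mod_cast congrArg (Nat.cast : ℕ → ℂ) (descFactorial_split (e i) (d i) (d' i))

lemma diffOp_mul (g h f : MvPolynomial σ ℂ) :
    diffOp (g * h) f = diffOp g (diffOp h f) := by
  induction g using MvPolynomial.induction_on' with
  | add p q hp hq => rw [add_mul, diffOp_add_left, hp, hq, diffOp_add_left]
  | monomial d a =>
    induction h using MvPolynomial.induction_on' with
    | add p q hp hq => rw [mul_add, diffOp_add_left, hp, hq, diffOp_add_left, diffOp_add_right]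
    | monomial d' a' =>
      induction f using MvPolynomial.induction_on' with
      | add p q hp hq => rw [diffOp_add_right, diffOp_add_right, hp, hq, diffOp_add_right]
      | monomial e b =>
        rw [MvPolynomial.monomial_mul, diffOp_monomial_monomial,
          diffOp_monomial_monomial, diffOp_smul_right, diffOp_monomial_monomial,
          smul_smul, cf_add_left]
        rw [show e - d' - d = e - (d + d') by
          ext i; simp only [Finsupp.tsub_apply, Finsupp.add_apply]; omega]
        ring_nf

/-- The annihilator of `f` as an ideal. -/
noncomputable def annIdeal (f : MvPolynomial σ ℂ) : Ideal (MvPolynomial σ ℂ) where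
  carrier := {g | diffOp g f = 0}
  add_mem' := fun {a b} ha hb => by
    simp only [Set.mem_setOf_eq] at *
    rw [diffOp_add_left, ha, hb, add_zero]
  zero_mem' := diffOp_zero_left f
  smul_mem' := fun c x hx => by
    simp only [Set.mem_setOf_eq, smul_eq_mul] at *
    rw [diffOp_mul, hx, diffOp_zero_right]

lemma mem_apolarIdeal {f g : MvPolynomial σ ℂ} :
    g ∈ apolarIdeal f ↔ diffOp g f = 0 := by
  have : apolarIdeal f = annIdeal f := by
    rw [apolarIdeal, show {g | diffOp g f = 0} = (annIdeal f : Set _) from rfl,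
      Ideal.span_eq]
  rw [this]; rfl

/-- `diffOp · f` as a linear map. -/
noncomputable def diffOpL (f : MvPolynomial σ ℂ) :
    MvPolynomial σ ℂ →ₗ[ℂ] MvPolynomial σ ℂ where
  toFun g := diffOp g f
  map_add' g g' := diffOp_add_left g g' f
  map_smul' r g := diffOp_smul_left r g f

@[simp] lemma diffOpL_apply (f g : MvPolynomial σ ℂ) : diffOpL f g = diffOp g f := rfl

section Sum

lemma pair_apply_inl (d₁ : σ →₀ ℕ) (d₂ : τ →₀ ℕ) (i : σ) :
    (Finsupp.mapDomain (Sum.inl : σ → σ ⊕ τ) d₁ + Finsupp.mapDomain (Sum.inr : τ → σ ⊕ τ) d₂) (Sum.inl i) = d₁ i := by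
  rw [Finsupp.add_apply, Finsupp.mapDomain_apply Sum.inl_injective,
    Finsupp.mapDomain_notin_range _ _ (by simp), add_zero]

lemma pair_apply_inr (d₁ : σ →₀ ℕ) (d₂ : τ →₀ ℕ) (j : τ) :
    (Finsupp.mapDomain (Sum.inl : σ → σ ⊕ τ) d₁ + Finsupp.mapDomain (Sum.inr : τ → σ ⊕ τ) d₂) (Sum.inr j) = d₂ j := by
  rw [Finsupp.add_apply, Finsupp.mapDomain_apply Sum.inr_injective,
    Finsupp.mapDomain_notin_range _ _ (by simp), zero_add]

lemma pair_sub (e₁ d₁ : σ →₀ ℕ) (e₂ d₂ : τ →₀ ℕ) :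
    (Finsupp.mapDomain (Sum.inl : σ → σ ⊕ τ) e₁ + Finsupp.mapDomain (Sum.inr : τ → σ ⊕ τ) e₂)
        - (Finsupp.mapDomain (Sum.inl : σ → σ ⊕ τ) d₁ + Finsupp.mapDomain (Sum.inr : τ → σ ⊕ τ) d₂)
      = Finsupp.mapDomain (Sum.inl : σ → σ ⊕ τ) (e₁ - d₁) + Finsupp.mapDomain (Sum.inr : τ → σ ⊕ τ) (e₂ - d₂) := by
  ext x
  cases x with
  | inl i =>
      rw [Finsupp.tsub_apply, pair_apply_inl, pair_apply_inl, pair_apply_inl,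
        Finsupp.tsub_apply]
  | inr j =>
      rw [Finsupp.tsub_apply, pair_apply_inr, pair_apply_inr, pair_apply_inr,
        Finsupp.tsub_apply]

lemma pair_support (d₁ : σ →₀ ℕ) (d₂ : τ →₀ ℕ) :
    (Finsupp.mapDomain (Sum.inl : σ → σ ⊕ τ) d₁ + Finsupp.mapDomain (Sum.inr : τ → σ ⊕ τ) d₂).support
      ⊆ d₁.support.image Sum.inl ∪ d₂.support.image Sum.inr :=
  Finsupp.support_add.trans
    (Finset.union_subset_union Finsupp.mapDomain_support Finsupp.mapDomain_support)

lemma cf_pair (d₁ e₁ : σ →₀ ℕ) (d₂ e₂ : τ →₀ ℕ) :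
    cf (Finsupp.mapDomain (Sum.inl : σ → σ ⊕ τ) d₁ + Finsupp.mapDomain (Sum.inr : τ → σ ⊕ τ) d₂)
        (Finsupp.mapDomain (Sum.inl : σ → σ ⊕ τ) e₁ + Finsupp.mapDomain (Sum.inr : τ → σ ⊕ τ) e₂)
      = cf d₁ e₁ * cf d₂ e₂ := by
  rw [cf_eq_prod _ (pair_support d₁ d₂), Finset.prod_union (by
      rw [Finset.disjoint_left]
      rintro x hx hy
      obtain ⟨i, -, rfl⟩ := Finset.mem_image.mp hx
      obtain ⟨j, -, h⟩ := Finset.mem_image.mp hy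
      exact Sum.inl_ne_inr h.symm),
    Finset.prod_image (fun a _ b _ h => Sum.inl_injective h),
    Finset.prod_image (fun a _ b _ h => Sum.inr_injective h)]
  rw [cf, cf]
  congr 1
  · exact Finset.prod_congr rfl fun i _ => by rw [pair_apply_inl, pair_apply_inl]
  · exact Finset.prod_congr rfl fun j _ => by rw [pair_apply_inr, pair_apply_inr]

lemma monomial_split (D : (σ ⊕ τ) →₀ ℕ) :
    ∃ (d₁ : σ →₀ ℕ) (d₂ : τ →₀ ℕ),
      D = Finsupp.mapDomain (Sum.inl : σ → σ ⊕ τ) d₁ + Finsupp.mapDomain (Sum.inr : τ → σ ⊕ τ) d₂ := by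
  refine ⟨Finsupp.comapDomain (Sum.inl : σ → σ ⊕ τ) D Sum.inl_injective.injOn,
    Finsupp.comapDomain (Sum.inr : τ → σ ⊕ τ) D Sum.inr_injective.injOn, ?_⟩
  ext x
  cases x with
  | inl i => rw [pair_apply_inl, Finsupp.comapDomain_apply]
  | inr j => rw [pair_apply_inr, Finsupp.comapDomain_apply]

lemma diffOp_rename_mul (g₁ f₁ : MvPolynomial σ ℂ) (g₂ f₂ : MvPolynomial τ ℂ) :
    diffOp (rename Sum.inl g₁ * rename Sum.inr g₂)
        (rename Sum.inl f₁ * rename Sum.inr f₂)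
      = rename (Sum.inl : σ → σ ⊕ τ) (diffOp g₁ f₁)
          * rename (Sum.inr : τ → σ ⊕ τ) (diffOp g₂ f₂) := by
  induction g₁ using MvPolynomial.induction_on' with
  | add p q hp hq =>
      rw [map_add, add_mul, diffOp_add_left, hp, hq, diffOp_add_left, map_add, add_mul]
  | monomial d₁ a₁ =>
  induction g₂ using MvPolynomial.induction_on' with
  | add p q hp hq =>
      rw [map_add, mul_add, diffOp_add_left, hp, hq, diffOp_add_left, map_add, mul_add]
  | monomial d₂ a₂ =>
  induction f₁ using MvPolynomial.induction_on' with
  | add p q hp hq =>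
      rw [map_add, add_mul, diffOp_add_right, hp, hq, diffOp_add_right, map_add, add_mul]
  | monomial e₁ b₁ =>
  induction f₂ using MvPolynomial.induction_on' with
  | add p q hp hq =>
      rw [map_add, mul_add, diffOp_add_right, hp, hq, diffOp_add_right, map_add, mul_add]
  | monomial e₂ b₂ =>
      simp only [rename_monomial, monomial_mul, diffOp_monomial_monomial, map_smul,
        smul_mul_assoc, mul_smul_comm, smul_smul, mul_one]
      rw [pair_sub, cf_pair]
      ring_nf

end Sum

section Main

open TensorProduct LinearMap

variable (f₁ : MvPolynomial σ ℂ) (f₂ : MvPolynomial τ ℂ)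

/-- The canonical algebra map splitting variables into a tensor product. -/
noncomputable def phi : MvPolynomial (σ ⊕ τ) ℂ →ₐ[ℂ]
    (MvPolynomial σ ℂ) ⊗[ℂ] (MvPolynomial τ ℂ) :=
  aeval (Sum.elim (fun i => (X i : MvPolynomial σ ℂ) ⊗ₜ[ℂ] (1 : MvPolynomial τ ℂ))
                  (fun j => (1 : MvPolynomial σ ℂ) ⊗ₜ[ℂ] (X j : MvPolynomial τ ℂ)))

lemma phi_rename_inl (g₁ : MvPolynomial σ ℂ) :
    phi (τ := τ) (rename Sum.inl g₁) = g₁ ⊗ₜ[ℂ] 1 := by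
  rw [phi, aeval_rename, Sum.elim_comp_inl]
  have h0 : (fun i => (X i : MvPolynomial σ ℂ) ⊗ₜ[ℂ] (1 : MvPolynomial τ ℂ))
      = fun i => (Algebra.TensorProduct.includeLeft :
        MvPolynomial σ ℂ →ₐ[ℂ] (MvPolynomial σ ℂ) ⊗[ℂ] (MvPolynomial τ ℂ)) (X i) := rfl
  rw [h0, ← comp_aeval, AlgHom.comp_apply, aeval_X_left_apply]
  rfl

lemma phi_rename_inr (g₂ : MvPolynomial τ ℂ) :
    phi (σ := σ) (rename Sum.inr g₂) = 1 ⊗ₜ[ℂ] g₂ := by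
  rw [phi, aeval_rename, Sum.elim_comp_inr]
  have h0 : (fun j => (1 : MvPolynomial σ ℂ) ⊗ₜ[ℂ] (X j : MvPolynomial τ ℂ))
      = fun j => (Algebra.TensorProduct.includeRight :
        MvPolynomial τ ℂ →ₐ[ℂ] (MvPolynomial σ ℂ) ⊗[ℂ] (MvPolynomial τ ℂ)) (X j) := rfl
  rw [h0, ← comp_aeval, AlgHom.comp_apply, aeval_X_left_apply]
  rfl

lemma phi_pair (g₁ : MvPolynomial σ ℂ) (g₂ : MvPolynomial τ ℂ) :
    phi (rename Sum.inl g₁ * rename Sum.inr g₂) = g₁ ⊗ₜ[ℂ] g₂ := by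
  rw [map_mul, phi_rename_inl, phi_rename_inr, Algebra.TensorProduct.tmul_mul_tmul,
    mul_one, one_mul]

/-- The inverse algebra map. -/
noncomputable def phiInv : (MvPolynomial σ ℂ) ⊗[ℂ] (MvPolynomial τ ℂ) →ₐ[ℂ]
    MvPolynomial (σ ⊕ τ) ℂ :=
  Algebra.TensorProduct.lift (rename Sum.inl) (rename Sum.inr)
    (fun _ _ => Commute.all _ _)

lemma phiInv_phi (g : MvPolynomial (σ ⊕ τ) ℂ) : phiInv (phi (τ := τ) g) = g := by
  have h : (phiInv (σ := σ) (τ := τ)).comp phi = AlgHom.id ℂ _ := by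
    apply MvPolynomial.algHom_ext
    rintro (i | j) <;>
      simp [phi, phiInv, Algebra.TensorProduct.lift_tmul]
  calc phiInv (phi g) = (phiInv.comp phi) g := rfl
  _ = g := by rw [h]; rfl

lemma phi_injective : Function.Injective (phi (σ := σ) (τ := τ)) := by
  intro a b h
  have := congrArg phiInv h
  rwa [phiInv_phi, phiInv_phi] at this

/-- The algebra map to the tensor product of the apolar algebras. -/
noncomputable def psi : MvPolynomial (σ ⊕ τ) ℂ →ₐ[ℂ]
    (apolarAlgebra f₁) ⊗[ℂ] (apolarAlgebra f₂) :=
  (Algebra.TensorProduct.map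
      (Ideal.Quotient.mkₐ ℂ (apolarIdeal f₁)) (Ideal.Quotient.mkₐ ℂ (apolarIdeal f₂))).comp
    phi

lemma psi_pair (g₁ : MvPolynomial σ ℂ) (g₂ : MvPolynomial τ ℂ) :
    psi f₁ f₂ (rename Sum.inl g₁ * rename Sum.inr g₂)
      = Ideal.Quotient.mk (apolarIdeal f₁) g₁ ⊗ₜ[ℂ] Ideal.Quotient.mk (apolarIdeal f₂) g₂ := by
  rw [psi, AlgHom.comp_apply, phi_pair, Algebra.TensorProduct.map_tmul,
    Ideal.Quotient.mkₐ_eq_mk, Ideal.Quotient.mkₐ_eq_mk]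

lemma psi_surjective : Function.Surjective (psi f₁ f₂) := by
  intro z
  induction z using TensorProduct.induction_on with
  | zero => exact ⟨0, map_zero _⟩
  | tmul a b =>
      obtain ⟨g₁, rfl⟩ := Ideal.Quotient.mk_surjective a
      obtain ⟨g₂, rfl⟩ := Ideal.Quotient.mk_surjective b
      exact ⟨rename Sum.inl g₁ * rename Sum.inr g₂, psi_pair f₁ f₂ g₁ g₂⟩
  | add x y hx hy =>
      obtain ⟨u, rfl⟩ := hx
      obtain ⟨v, rfl⟩ := hy
      exact ⟨u + v, map_add _ u v⟩

lemma key_square (g : MvPolynomial (σ ⊕ τ) ℂ) :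
    TensorProduct.map (diffOpL f₁) (diffOpL f₂) (phi g)
      = phi (diffOp g (rename Sum.inl f₁ * rename Sum.inr f₂)) := by
  induction g using MvPolynomial.induction_on' with
  | add p q hp hq =>
      rw [map_add, map_add, hp, hq, diffOp_add_left, map_add]
  | monomial D a =>
      obtain ⟨d₁, d₂, rfl⟩ := monomial_split D
      have h : (monomial (Finsupp.mapDomain (Sum.inl : σ → σ ⊕ τ) d₁
            + Finsupp.mapDomain (Sum.inr : τ → σ ⊕ τ) d₂) a : MvPolynomial (σ ⊕ τ) ℂ)
          = rename Sum.inl (monomial d₁ a) * rename Sum.inr (monomial d₂ 1) := by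
        rw [rename_monomial, rename_monomial, monomial_mul, mul_one]
      rw [h, phi_pair, diffOp_rename_mul, phi_pair, TensorProduct.map_tmul]
      rfl

lemma ker_mk₁ :
    LinearMap.ker (Ideal.Quotient.mkₐ ℂ (apolarIdeal f₁)).toLinearMap
      = LinearMap.ker (diffOpL f₁) := by
  ext g
  simp [LinearMap.mem_ker, Ideal.Quotient.eq_zero_iff_mem, mem_apolarIdeal]

lemma ker_maps :
    LinearMap.ker (TensorProduct.map
        (Ideal.Quotient.mkₐ ℂ (apolarIdeal f₁)).toLinearMap
        (Ideal.Quotient.mkₐ ℂ (apolarIdeal f₂)).toLinearMap)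
      = LinearMap.ker (TensorProduct.map (diffOpL f₁) (diffOpL f₂)) := by
  -- both kernels are `ker D₁ ⊗ S₂ ⊔ S₁ ⊗ ker D₂`
  have h1 := TensorProduct.map_ker
    ((Ideal.Quotient.mkₐ ℂ (apolarIdeal f₁)).toLinearMap).exact_subtype_ker_map
    (fun z => Ideal.Quotient.mk_surjective z)
    ((Ideal.Quotient.mkₐ ℂ (apolarIdeal f₂)).toLinearMap).exact_subtype_ker_map
    (fun z => Ideal.Quotient.mk_surjective z)
  -- kernel of the corestricted product map
  have hcomp : TensorProduct.map (diffOpL f₁) (diffOpL f₂)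
      = (TensorProduct.map (LinearMap.range (diffOpL f₁)).subtype
          (LinearMap.range (diffOpL f₂)).subtype).comp
        (TensorProduct.map (diffOpL f₁).rangeRestrict (diffOpL f₂).rangeRestrict) := by
    rw [← TensorProduct.map_comp]
    congr 1 <;> ext x <;> rfl
  have hinj : Function.Injective (TensorProduct.map
      (LinearMap.range (diffOpL f₁)).subtype (LinearMap.range (diffOpL f₂)).subtype) := by
    rw [← LinearMap.lTensor_comp_rTensor]
    exact (Module.Flat.lTensor_preserves_injective_linearMap _
        (Submodule.injective_subtype _)).comp
      (Module.Flat.rTensor_preserves_injective_linearMap _ (Submodule.injective_subtype _))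
  have h2 := TensorProduct.map_ker
    ((diffOpL f₁).rangeRestrict).exact_subtype_ker_map (LinearMap.surjective_rangeRestrict _)
    ((diffOpL f₂).rangeRestrict).exact_subtype_ker_map (LinearMap.surjective_rangeRestrict _)
  rw [hcomp, LinearMap.ker_comp, LinearMap.ker_eq_bot_of_injective hinj, Submodule.comap_bot, h2, h1,
    LinearMap.ker_rangeRestrict, LinearMap.ker_rangeRestrict, ker_mk₁ f₁, ker_mk₁ f₂]

lemma psi_eq_zero_iff (g : MvPolynomial (σ ⊕ τ) ℂ) :
    psi f₁ f₂ g = 0 ↔ diffOp g (rename Sum.inl f₁ * rename Sum.inr f₂) = 0 := by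
  have hmap : (Algebra.TensorProduct.map
        (Ideal.Quotient.mkₐ ℂ (apolarIdeal f₁)) (Ideal.Quotient.mkₐ ℂ (apolarIdeal f₂))).toLinearMap
      = TensorProduct.map
        (Ideal.Quotient.mkₐ ℂ (apolarIdeal f₁)).toLinearMap
        (Ideal.Quotient.mkₐ ℂ (apolarIdeal f₂)).toLinearMap :=
    TensorProduct.ext' fun a b => rfl
  have step1 : psi f₁ f₂ g = TensorProduct.map
      (Ideal.Quotient.mkₐ ℂ (apolarIdeal f₁)).toLinearMap
      (Ideal.Quotient.mkₐ ℂ (apolarIdeal f₂)).toLinearMap (phi g) := by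
    rw [psi, AlgHom.comp_apply, ← hmap]; rfl
  rw [step1]
  constructor
  · intro h0
    have : phi (τ := τ) g ∈ LinearMap.ker (TensorProduct.map (diffOpL f₁) (diffOpL f₂)) := by
      rw [← ker_maps]; exact h0
    rw [LinearMap.mem_ker, key_square] at this
    have h2 : phi (τ := τ) (diffOp g (rename Sum.inl f₁ * rename Sum.inr f₂)) = phi 0 := by
      rw [map_zero]; exact this
    exact phi_injective h2
  · intro h0
    have : phi (τ := τ) g ∈ LinearMap.ker (TensorProduct.map (diffOpL f₁) (diffOpL f₂)) := by
      rw [LinearMap.mem_ker, key_square, h0, map_zero]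
    rw [← ker_maps] at this
    exact this

theorem main_general (f₁ : MvPolynomial σ ℂ) (f₂ : MvPolynomial τ ℂ) :
    Nonempty
      (apolarAlgebra (rename Sum.inl f₁ * rename Sum.inr f₂ : MvPolynomial (σ ⊕ τ) ℂ)
        ≃ₐ[ℂ] TensorProduct ℂ (apolarAlgebra f₁) (apolarAlgebra f₂)) := by
  have hker : apolarIdeal (rename Sum.inl f₁ * rename Sum.inr f₂ : MvPolynomial (σ ⊕ τ) ℂ)
      = RingHom.ker (psi f₁ f₂) := by
    ext g
    rw [mem_apolarIdeal, RingHom.mem_ker]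
    exact (psi_eq_zero_iff f₁ f₂ g).symm
  exact ⟨(Ideal.quotientEquivAlgOfEq ℂ hker).trans
    (Ideal.quotientKerAlgEquivOfSurjective (psi_surjective f₁ f₂))⟩

end Main

end Apolar


/-- If A₁, A₂ are the apolar algebras of f₁(x₁,…,xₙ), f₂(y₁,…,y_m) in disjoint sets
of variables, then the apolar algebra of f₁·f₂ is isomorphic to A₁ ⊗_ℂ A₂. -/
theorem stmt14 (n m : ℕ) (f₁ : MvPolynomial (Fin n) ℂ) (f₂ : MvPolynomial (Fin m) ℂ) :
    Nonempty
      (apolarAlgebra (rename Sum.inl f₁ * rename Sum.inr f₂ :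
          MvPolynomial (Fin n ⊕ Fin m) ℂ)
        ≃ₐ[ℂ] TensorProduct ℂ (apolarAlgebra f₁) (apolarAlgebra f₂)) := by
  exact Apolar.main_general f₁ f₂
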